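/- For any modal formula A, the following are equivalent: (1) A is a theorem of MN; (2) A is valid in all MN-frames; (3) A is valid in all finite MN-frames. -/

import Mathlib

/-- Modal formulas: variables, ⊥, →, □. -/
inductive Fml : Type
  | var : ℕ → Fml
  | bot : Fml
  | imp : Fml → Fml → Fml
  | box : Fml → Fml
  deriving DecidableEq

namespace Fml

/-- ¬A is an abbreviation for A → ⊥. -/
def neg (A : Fml) : Fml := imp A bot

/-- ⊤ is an abbreviation for ¬⊥. -/
def top : Fml := neg bot

/-- A ∧ B is an abbreviation for ¬(A → ¬B). -/
def and (A B : Fml) : Fml := neg (imp A (neg B))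

/-- Uniform substitution. -/
def subst (σ : ℕ → Fml) : Fml → Fml
  | var n => σ n
  | bot => bot
  | imp A B => imp (subst σ A) (subst σ B)
  | box A => box (subst σ A)

end Fml

/-- A formula is a propositional tautology if it is true under every valuation
that respects ⊥ and →, treating variables and boxed formulas as atoms. -/
def IsTautology (A : Fml) : Prop :=
  ∀ val : Fml → Bool,
    (val Fml.bot = false) →
    (∀ B C : Fml, val (Fml.imp B C) = (!(val B) || val C)) →
    val A = true

/-- Provability in the extension of the logic MN by the axioms in `Ax`:
axioms are all propositional tautologies and the members of `Ax`; the rules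
are Modus Ponens, Necessitation, and RM. -/
inductive MNProv (Ax : Fml → Prop) : Fml → Prop
  | taut {A : Fml} : IsTautology A → MNProv Ax A
  | ax {A : Fml} : Ax A → MNProv Ax A
  | mp {A B : Fml} : MNProv Ax (A.imp B) → MNProv Ax A → MNProv Ax B
  | nec {A : Fml} : MNProv Ax A → MNProv Ax A.box
  | rm {A B : Fml} : MNProv Ax (A.imp B) → MNProv Ax (A.box.imp B.box)

/-- The axiom P : ¬□⊥. -/
def AxP : Fml → Prop := fun A => A = (Fml.box Fml.bot).neg

/-- The axiom scheme D : ¬(□B ∧ □¬B). -/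
def AxD : Fml → Prop := fun A => ∃ B : Fml, A = ((B.box).and (B.neg.box)).neg

/-- The axiom scheme 4 : □B → □□B. -/
def AxF : Fml → Prop := fun A => ∃ B : Fml, A = B.box.imp B.box.box

def MN : Fml → Prop := MNProv (fun _ => False)
def MNP : Fml → Prop := MNProv AxP
def MND : Fml → Prop := MNProv AxD
def MNF : Fml → Prop := MNProv AxF
def MNPF : Fml → Prop := MNProv (fun A => AxP A ∨ AxF A)
def MNDF : Fml → Prop := MNProv (fun A => AxD A ∨ AxF A)

/-- An MN-frame: a nonempty set `W` together with a relation between worlds and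
nonempty subsets of `W` satisfying monotonicity. -/
structure MNFrame (W : Type*) where
  nonempty : Nonempty W
  rel : W → Set W → Prop
  rel_nonempty : ∀ (x : W) (V : Set W), rel x V → V.Nonempty
  mono : ∀ (x : W) (V U : Set W), rel x V → V ⊆ U → rel x U

/-- `Sat` is a satisfaction relation on the MN-frame `F`. -/
structure IsSat {W : Type*} (F : MNFrame W) (Sat : W → Fml → Prop) : Prop where
  bot : ∀ x : W, ¬ Sat x Fml.bot
  imp : ∀ (x : W) (A B : Fml), Sat x (A.imp B) ↔ (Sat x A → Sat x B)
  box : ∀ (x : W) (A : Fml), Sat x A.box ↔ ∀ V : Set W, F.rel x V → ∃ y ∈ V, Sat y A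

/-- A formula is valid in an MN-frame if it is satisfied at every world under
every satisfaction relation on the frame. -/
def Valid {W : Type*} (F : MNFrame W) (A : Fml) : Prop :=
  ∀ Sat : W → Fml → Prop, IsSat F Sat → ∀ x : W, Sat x A

/-- Transitivity of an MN-frame. -/
def MNFrame.IsTransitive {W : Type*} (F : MNFrame W) : Prop :=
  ∀ (x : W) (V : Set W) (U : W → Set W),
    F.rel x V → (∀ y ∈ V, F.rel y (U y)) → F.rel x (⋃ y ∈ V, U y)

/-- MNP-frames: every world is related to some subset. -/
def MNFrame.IsMNP {W : Type*} (F : MNFrame W) : Prop :=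
  ∀ x : W, ∃ V : Set W, F.rel x V

/-- MND-frames: every world is related to `V` or to its complement. -/
def MNFrame.IsMND {W : Type*} (F : MNFrame W) : Prop :=
  ∀ (x : W) (V : Set W), F.rel x V ∨ F.rel x Vᶜ

namespace Stmt5Aux

/-! ### Propositional infrastructure -/

/-- Conjunction of a list of formulas. -/
def listConj : List Fml → Fml
  | [] => Fml.top
  | B :: L => B.and (listConj L)

section Val

variable (val : Fml → Bool) (h0 : val Fml.bot = false)
  (h1 : ∀ B C : Fml, val (Fml.imp B C) = (!(val B) || val C))

include h0 h1

lemma val_neg (B : Fml) : val B.neg = !val B := by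
  simp [Fml.neg, h1, h0]

lemma val_top : val Fml.top = true := by
  simp [Fml.top, val_neg val h0 h1, h0]

lemma val_and (B C : Fml) : val (B.and C) = (val B && val C) := by
  rw [Fml.and, val_neg val h0 h1, h1, val_neg val h0 h1]
  cases val B <;> cases val C <;> simp

lemma val_listConj (L : List Fml) : val (listConj L) = L.all val := by
  induction L with
  | nil => simp [listConj, val_top val h0 h1]
  | cons B L ih => simp [listConj, val_and val h0 h1, ih]

lemma val_foldr_of_target {D : Fml} (L : List Fml) (hD : val D = true) :
    val (L.foldr Fml.imp D) = true := by
  induction L with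
  | nil => exact hD
  | cons B L ih => simp [h1, ih]

lemma val_foldr_of_mem {D B : Fml} (L : List Fml) (hB : B ∈ L) (hvB : val B = false) :
    val (L.foldr Fml.imp D) = true := by
  induction L with
  | nil => simp at hB
  | cons C L ih =>
    rcases List.mem_cons.mp hB with h | h
    · subst h; simp [h1, hvB]
    · simp [h1, ih h]

end Val

lemma mp_chain {Ax : Fml → Prop} :
    ∀ (L : List Fml) {D : Fml}, MNProv Ax (L.foldr Fml.imp D) →
      (∀ B ∈ L, MNProv Ax B) → MNProv Ax D
  | [], _, h, _ => h
  | B :: L, _, h, hL =>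
    mp_chain L (MNProv.mp h (hL B (by simp))) (fun C hC => hL C (by simp [hC]))

lemma taut_inst1 (p q : Fml) : IsTautology (p.imp ((q.imp p.neg).imp q.neg)) := by
  intro val h0 h1
  simp only [Fml.neg, h1, h0]
  cases val p <;> cases val q <;> simp

lemma taut_inst2 (p q r : Fml) :
    IsTautology ((p.imp q).imp ((r.imp p).imp ((r.imp q.neg).imp r.neg))) := by
  intro val h0 h1
  simp only [Fml.neg, h1, h0]
  cases val p <;> cases val q <;> cases val r <;> simp

/-! ### Subformulas -/

/-- The finite set of subformulas of a formula. -/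
def subf : Fml → Finset Fml
  | .var n => {.var n}
  | .bot => {.bot}
  | .imp B C => insert (.imp B C) (subf B ∪ subf C)
  | .box B => insert (.box B) (subf B)

lemma mem_subf_self (B : Fml) : B ∈ subf B := by
  cases B <;> simp [subf]

lemma subf_trans : ∀ B : Fml, ∀ C ∈ subf B, subf C ⊆ subf B := by
  intro B
  induction B with
  | var n =>
    intro C hC
    simp only [subf, Finset.mem_singleton] at hC
    subst hC; exact subset_rfl
  | bot =>
    intro C hC
    simp only [subf, Finset.mem_singleton] at hC
    subst hC; exact subset_rfl
  | imp B1 B2 ih1 ih2 =>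
    intro C hC
    rcases Finset.mem_insert.mp hC with h | h
    · subst h; exact subset_rfl
    · rcases Finset.mem_union.mp h with h | h
      · exact (ih1 C h).trans ((Finset.subset_union_left).trans (Finset.subset_insert _ _))
      · exact (ih2 C h).trans ((Finset.subset_union_right).trans (Finset.subset_insert _ _))
  | box B ih =>
    intro C hC
    rcases Finset.mem_insert.mp hC with h | h
    · subst h; exact subset_rfl
    · exact (ih C h).trans (Finset.subset_insert _ _)

lemma mem_subf_imp_left (B C : Fml) : B ∈ subf (B.imp C) :=
  Finset.mem_insert_of_mem (Finset.mem_union_left _ (mem_subf_self B))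

lemma mem_subf_imp_right (B C : Fml) : C ∈ subf (B.imp C) :=
  Finset.mem_insert_of_mem (Finset.mem_union_right _ (mem_subf_self C))

lemma mem_subf_box (B : Fml) : B ∈ subf B.box :=
  Finset.mem_insert_of_mem (mem_subf_self B)

/-! ### Atoms and evaluation -/

variable (s : Finset Fml)

/-- Whether a formula is "atomic" for propositional evaluation. -/
def atomic : Fml → Bool
  | .var _ => true
  | .box _ => true
  | _ => false

/-- The atomic members of `s`. -/
def At : Finset Fml := s.filter fun B => atomic B

/-- Evaluation of a formula, reading truth values of atomic formulas off
membership in `w`. -/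
def ev (w : Finset Fml) : Fml → Bool
  | .var n => decide (Fml.var n ∈ w)
  | .bot => false
  | .imp B C => !(ev w B) || ev w C
  | .box B => decide (Fml.box B ∈ w)

/-- All atomic parts of the formula belong to `At s`. -/
def good : Fml → Prop
  | .var n => Fml.var n ∈ At s
  | .bot => True
  | .imp B C => good B ∧ good C
  | .box B => Fml.box B ∈ At s

lemma good_of_mem (hs : ∀ B ∈ s, subf B ⊆ s) : ∀ B ∈ s, good s B := by
  intro B
  induction B with
  | var n => intro h; exact Finset.mem_filter.mpr ⟨h, rfl⟩
  | bot => intro _; trivial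
  | imp B C ihB ihC =>
    intro h
    exact ⟨ihB (hs _ h (mem_subf_imp_left B C)), ihC (hs _ h (mem_subf_imp_right B C))⟩
  | box B _ => intro h; exact Finset.mem_filter.mpr ⟨h, rfl⟩

/-- Literal of `B` relative to `w`. -/
def lit (w : Finset Fml) (B : Fml) : Fml := if B ∈ w then B else B.neg

/-- The characteristic formula of the atom `w`. -/
noncomputable def chi (w : Finset Fml) : Fml := listConj (((At s).toList).map (lit w))

/-- Consistency of an atom. -/
def Con (w : Finset Fml) : Prop := ¬ MN (chi s w).neg

section Val2

variable (val : Fml → Bool) (h0 : val Fml.bot = false)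
  (h1 : ∀ B C : Fml, val (Fml.imp B C) = (!(val B) || val C))

include h0 h1

lemma val_chi_of {w : Finset Fml} (h : ∀ B ∈ At s, val (lit w B) = true) :
    val (chi s w) = true := by
  rw [chi, val_listConj val h0 h1]
  rw [List.all_eq_true]
  intro x hx
  obtain ⟨B, hB, rfl⟩ := List.mem_map.mp hx
  exact h B (Finset.mem_toList.mp hB)

lemma val_of_chi {w : Finset Fml} (hchi : val (chi s w) = true) {B : Fml}
    (hB : B ∈ At s) : val (lit w B) = true := by
  rw [chi, val_listConj val h0 h1, List.all_eq_true] at hchi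
  exact hchi _ (List.mem_map.mpr ⟨B, Finset.mem_toList.mpr hB, rfl⟩)

lemma ev_agree (w : Finset Fml) (hw : ∀ B ∈ At s, val B = decide (B ∈ w)) :
    ∀ D : Fml, good s D → val D = ev w D := by
  intro D
  induction D with
  | var n => intro h; exact hw _ h
  | bot => intro _; simpa [ev] using h0
  | imp B C ihB ihC =>
    intro h
    have hB := ihB h.1
    have hC := ihC h.2
    simp [ev, h1, hB, hC]
  | box B _ => intro h; exact hw _ h

end Val2

lemma taut_chi_imp_lit (w : Finset Fml) {B : Fml} (hB : B ∈ At s) :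
    IsTautology ((chi s w).imp (lit w B)) := by
  intro val h0 h1
  rw [h1]
  cases hc : val (chi s w) with
  | false => simp
  | true => simp [val_of_chi s val h0 h1 hc hB]

lemma taut_chi_imp_mem (w : Finset Fml) {B : Fml} (hB : B ∈ At s) (hBw : B ∈ w) :
    IsTautology ((chi s w).imp B) := by
  have := taut_chi_imp_lit s w hB
  rwa [lit, if_pos hBw] at this

lemma taut_chi_imp_neg (w : Finset Fml) {B : Fml} (hB : B ∈ At s) (hBw : B ∉ w) :
    IsTautology ((chi s w).imp B.neg) := by
  have := taut_chi_imp_lit s w hB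
  rwa [lit, if_neg hBw] at this

/-! ### The key syntactic lemma -/

open Classical in
lemma lgen {D : Fml} (hsD : good s D)
    (h : ∀ w ⊆ At s, Con s w → ev w D = true) : MN D := by
  classical
  set L : List Fml := (((At s).powerset.toList).filter
      (fun w => ev w D = false)).map (fun w => (chi s w).neg) with hLdef
  have htaut : IsTautology (L.foldr Fml.imp D) := by
    intro val h0 h1
    by_cases hvD : val D = true
    · exact val_foldr_of_target val h0 h1 L hvD
    · have hvD' : val D = false := by
        cases hv : val D
        · rfl
        · exact absurd hv hvD
      set w0 : Finset Fml := (At s).filter (fun B => val B = true) with hw0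
      have hmem : ∀ B ∈ At s, val B = decide (B ∈ w0) := by
        intro B hB
        simp only [hw0, Finset.mem_filter, hB, true_and]
        cases hv : val B <;> simp [hv]
      have hevw0 : ev w0 D = false := by
        rw [← ev_agree s val h0 h1 w0 hmem D hsD]
        exact hvD'
      have hchi : val (chi s w0) = true := by
        apply val_chi_of s val h0 h1
        intro B hB
        by_cases hv : val B = true
        · rw [lit, if_pos (Finset.mem_filter.mpr ⟨hB, hv⟩)]; exact hv
        · have hBw : B ∉ w0 := fun hc => hv (Finset.mem_filter.mp hc).2
          rw [lit, if_neg hBw, val_neg val h0 h1]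
          cases hv2 : val B
          · rfl
          · exact absurd hv2 hv
      have hmemL : (chi s w0).neg ∈ L := by
        rw [hLdef]
        apply List.mem_map.mpr
        refine ⟨w0, List.mem_filter.mpr ⟨Finset.mem_toList.mpr ?_, by simp [hevw0]⟩, rfl⟩
        exact Finset.mem_powerset.mpr (Finset.filter_subset _ _)
      exact val_foldr_of_mem val h0 h1 L hmemL (by rw [val_neg val h0 h1, hchi]; rfl)
  refine mp_chain L (MNProv.taut htaut) ?_
  intro B hB
  rw [hLdef] at hB
  obtain ⟨w, hw, rfl⟩ := List.mem_map.mp hB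
  have hw1 : w ⊆ At s := Finset.mem_powerset.mp (Finset.mem_toList.mp (List.mem_filter.mp hw).1)
  have hw2 : ev w D = false := by simpa using (List.mem_filter.mp hw).2
  by_contra hc
  have := h w hw1 hc
  rw [this] at hw2
  exact Bool.true_eq_false_eq_False hw2

lemma exists_atom_false {D : Fml} (hsD : good s D) (hD : ¬ MN D) :
    ∃ w, w ⊆ At s ∧ Con s w ∧ ev w D = false := by
  by_contra hno
  push_neg at hno
  refine hD (lgen s hsD ?_)
  intro w hw hcon
  cases hv : ev w D
  · exact absurd hv (hno w hw hcon)
  · rfl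

lemma con_false_of_box_nec {x : Finset Fml} (hx : Con s x) {C : Fml}
    (hCA : Fml.box C ∈ At s) (hCx : Fml.box C ∉ x) (hC : MN C) : False := by
  have h1 : MN (Fml.box C) := MNProv.nec hC
  have h2 : MN ((chi s x).imp (Fml.box C).neg) :=
    MNProv.taut (taut_chi_imp_neg s x hCA hCx)
  exact hx (MNProv.mp (MNProv.mp (MNProv.taut (taut_inst1 (Fml.box C) (chi s x))) h1) h2)

lemma lbox1 (hs : ∀ B ∈ s, subf B ⊆ s) {x : Finset Fml} (hxcon : Con s x) {C : Fml}
    (hC : Fml.box C ∈ s) (hev : ev x (Fml.box C) = false) :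
    ∃ v, v ⊆ At s ∧ Con s v ∧ ev v C = false := by
  have hCs : C ∈ s := hs _ hC (mem_subf_box C)
  have hCA : Fml.box C ∈ At s := Finset.mem_filter.mpr ⟨hC, rfl⟩
  have hCx : Fml.box C ∉ x := by
    simpa [ev] using hev
  apply exists_atom_false s (good_of_mem s hs C hCs)
  intro hMN
  exact con_false_of_box_nec s hxcon hCA hCx hMN

lemma lbox2 (hs : ∀ B ∈ s, subf B ⊆ s) {x : Finset Fml} (hxcon : Con s x) {B C : Fml}
    (hB : Fml.box B ∈ s) (hC : Fml.box C ∈ s)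
    (hevB : ev x (Fml.box B) = true) (hevC : ev x (Fml.box C) = false) :
    ∃ v, v ⊆ At s ∧ Con s v ∧ ev v B = true ∧ ev v C = false := by
  by_contra hno
  push_neg at hno
  have hBs : B ∈ s := hs _ hB (mem_subf_box B)
  have hCs : C ∈ s := hs _ hC (mem_subf_box C)
  have hgBC : good s (B.imp C) := ⟨good_of_mem s hs B hBs, good_of_mem s hs C hCs⟩
  have himp : MN (B.imp C) := by
    apply lgen s hgBC
    intro w hw hcon
    show ev w (B.imp C) = true
    cases hb : ev w B with
    | false => simp [ev, hb]
    | true =>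
      have hcC : ev w C ≠ false := hno w hw hcon hb
      have : ev w C = true := by
        cases hc : ev w C
        · exact absurd hc hcC
        · rfl
      simp [ev, hb, this]
  have hrm : MN ((Fml.box B).imp (Fml.box C)) := MNProv.rm himp
  have hBA : Fml.box B ∈ At s := Finset.mem_filter.mpr ⟨hB, rfl⟩
  have hCA : Fml.box C ∈ At s := Finset.mem_filter.mpr ⟨hC, rfl⟩
  have hBx : Fml.box B ∈ x := by simpa [ev] using hevB
  have hCx : Fml.box C ∉ x := by simpa [ev] using hevC
  have h2 : MN ((chi s x).imp (Fml.box B)) := MNProv.taut (taut_chi_imp_mem s x hBA hBx)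
  have h3 : MN ((chi s x).imp (Fml.box C).neg) := MNProv.taut (taut_chi_imp_neg s x hCA hCx)
  exact hxcon (MNProv.mp (MNProv.mp (MNProv.mp
    (MNProv.taut (taut_inst2 (Fml.box B) (Fml.box C) (chi s x))) hrm) h2) h3)

/-! ### The canonical finite model -/

/-- Worlds of the canonical finite model: consistent atoms. -/
def World : Type := {w : Finset Fml // w ⊆ At s ∧ Con s w}

open Classical in
noncomputable instance : Finite (World s) := by
  classical
  apply Finite.of_injective
    (fun w : World s => (fun B : {B // B ∈ At s} => decide (B.1 ∈ w.1)))
  intro u v huv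
  apply Subtype.ext
  ext B
  constructor
  · intro hB
    have hBA : B ∈ At s := u.2.1 hB
    have h := congrFun huv ⟨B, hBA⟩
    rw [decide_eq_decide] at h
    exact h.mp hB
  · intro hB
    have hBA : B ∈ At s := v.2.1 hB
    have h := congrFun huv ⟨B, hBA⟩
    rw [decide_eq_decide] at h
    exact h.mpr hB

/-- The canonical relation. -/
def relC (x : World s) (V : Set (World s)) : Prop :=
  ∃ C : Fml, Fml.box C ∈ s ∧ ev x.1 (Fml.box C) = false ∧
    {y : World s | ev y.1 C = false} ⊆ V

/-- The canonical satisfaction relation. -/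
def SatC : Fml → World s → Prop
  | .var n, x => Fml.var n ∈ x.1
  | .bot, _ => False
  | .imp B C, x => SatC B x → SatC C x
  | .box B, x => ∀ V : Set (World s), relC s x V → ∃ y ∈ V, SatC B y

lemma truth (hs : ∀ B ∈ s, subf B ⊆ s) :
    ∀ B : Fml, B ∈ s → ∀ x : World s, SatC s B x ↔ ev x.1 B = true := by
  intro B
  induction B with
  | var n => intro _ x; simp [SatC, ev]
  | bot => intro _ x; simp [SatC, ev]
  | imp B C ihB ihC =>
    intro h x
    have hB : B ∈ s := hs _ h (mem_subf_imp_left B C)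
    have hC : C ∈ s := hs _ h (mem_subf_imp_right B C)
    show (SatC s B x → SatC s C x) ↔ _
    rw [ihB hB x, ihC hC x]
    show _ ↔ (!(ev x.1 B) || ev x.1 C) = true
    cases hb : ev x.1 B <;> simp [hb]
  | box B ih =>
    intro h x
    have hB : B ∈ s := hs _ h (mem_subf_box B)
    constructor
    · intro hsat
      by_contra hev
      have hev' : ev x.1 (Fml.box B) = false := by
        cases hv : ev x.1 (Fml.box B)
        · rfl
        · exact absurd hv hev
      have hrel : relC s x {y : World s | ev y.1 B = false} :=
        ⟨B, h, hev', fun y hy => hy⟩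
      obtain ⟨y, hyV, hyB⟩ := hsat _ hrel
      simp only [Set.mem_setOf_eq] at hyV
      have := (ih hB y).mp hyB
      rw [this] at hyV
      exact Bool.true_eq_false_eq_False hyV
    · intro hev V hrel
      obtain ⟨C, hCs, hCev, hsub⟩ := hrel
      obtain ⟨v, hv1, hv2, hv3, hv4⟩ := lbox2 s hs x.2.2 h hCs hev hCev
      refine ⟨⟨v, hv1, hv2⟩, hsub hv4, ?_⟩
      exact (ih hB ⟨v, hv1, hv2⟩).mpr hv3

/-! ### Soundness -/

theorem soundness {A : Fml} (h : MN A) : ∀ (W : Type) (F : MNFrame W), Valid F A := by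
  intro W F
  induction h with
  | taut ht =>
    intro Sat hSat x
    classical
    have h0 : (decide (Sat x Fml.bot) : Bool) = false :=
      decide_eq_false (hSat.bot x)
    have h1 : ∀ B C : Fml,
        (decide (Sat x (B.imp C)) : Bool) = (!(decide (Sat x B)) || decide (Sat x C)) := by
      intro B C
      by_cases hB : Sat x B <;> by_cases hC : Sat x C <;>
        simp [hSat.imp x B C, hB, hC]
    have := ht (fun B => decide (Sat x B)) h0 h1
    exact of_decide_eq_true this
  | ax hax => exact absurd hax (by simp)
  | mp _ _ ih1 ih2 =>
    intro Sat hSat x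
    exact (hSat.imp x _ _).mp (ih1 Sat hSat x) (ih2 Sat hSat x)
  | nec _ ih =>
    intro Sat hSat x
    rw [hSat.box]
    intro V hV
    obtain ⟨y, hy⟩ := F.rel_nonempty x V hV
    exact ⟨y, hy, ih Sat hSat y⟩
  | rm _ ih =>
    intro Sat hSat x
    rw [hSat.imp]
    intro hbox
    rw [hSat.box] at hbox ⊢
    intro V hV
    obtain ⟨y, hyV, hyA⟩ := hbox V hV
    exact ⟨y, hyV, (hSat.imp y _ _).mp (ih Sat hSat y) hyA⟩

/-! ### Completeness -/

theorem completeness {A : Fml} (h : ∀ (W : Type) (F : MNFrame W), Finite W → Valid F A) :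
    MN A := by
  classical
  by_contra hA
  set s : Finset Fml := subf A with hsdef
  have hs : ∀ B ∈ s, subf B ⊆ s := subf_trans A
  have hgood : good s A := good_of_mem s hs A (mem_subf_self A)
  obtain ⟨w0, hw0sub, hw0con, hw0ev⟩ := exists_atom_false s hgood hA
  let F : MNFrame (World s) :=
    { nonempty := ⟨⟨w0, hw0sub, hw0con⟩⟩
      rel := relC s
      rel_nonempty := by
        rintro x V ⟨C, hCs, hCev, hsub⟩
        obtain ⟨v, hv1, hv2, hv3⟩ := lbox1 s hs x.2.2 hCs hCev
        exact ⟨⟨v, hv1, hv2⟩, hsub hv3⟩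
      mono := by
        rintro x V U ⟨C, hCs, hCev, hsub⟩ hVU
        exact ⟨C, hCs, hCev, hsub.trans hVU⟩ }
  have hSat : IsSat F (fun x B => SatC s B x) := by
    refine ⟨fun x hx => hx, fun x B C => Iff.rfl, fun x B => Iff.rfl⟩
  have hval := h (World s) F inferInstance (fun x B => SatC s B x) hSat ⟨w0, hw0sub, hw0con⟩
  replace hval : ev w0 A = true := (truth s hs A (mem_subf_self A) ⟨w0, hw0sub, hw0con⟩).mp hval
  rw [hval] at hw0ev
  exact Bool.true_eq_false_eq_False hw0ev

end Stmt5Aux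


/-- A formula is a theorem of MN iff it is valid in all MN-frames
iff it is valid in all finite MN-frames. -/
theorem stmt5 (A : Fml) :
    (MN A ↔ ∀ (W : Type) (F : MNFrame W), Valid F A) ∧
    (MN A ↔ ∀ (W : Type) (F : MNFrame W), Finite W → Valid F A) := by
  constructor
  · exact ⟨fun h => Stmt5Aux.soundness h,
      fun h => Stmt5Aux.completeness (fun W F _ => h W F)⟩
  · exact ⟨fun h W F _ => Stmt5Aux.soundness h W F, Stmt5Aux.completeness⟩
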